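/- Fix an integer d ≤ 1 and let g(z) = z^{(4-d)/8} (a fixed branch on the sector D = {r e^{iθ} : 0 < r < r₀, 0 < θ < 4π/(4-d)}). If z : (a,b) → D is a differentiable curve satisfying z'(t) = e^{i dθ(t)/4}, where θ(t) = arg z(t), then the curve w(t) = g(z(t)), written in polar form w = ρ e^{iφ}, satisfies arg w'(t) = -φ(t) (modulo 2π) whenever w'(t) ≠ 0. -/

import Mathlib

open Real Set

/-- Under the conformal map `g(z) = z^{(4-d)/8}` (in the polar branch
`r e^{iθ} ↦ r^β e^{iβθ}`, `β = (4-d)/8`), a streamline of the local singularity model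
`z' = e^{i dθ/4}` satisfies `arg w'(t) = -φ(t) (mod 2π)`, where `φ = β θ` is the
argument of `w = g ∘ z`. -/
theorem stmt_3 (d : ℤ) (hd : d ≤ 1) (r₀ : ℝ) (hr₀ : 0 < r₀) (a b : ℝ)
    (r θ : ℝ → ℝ) (z w : ℝ → ℂ)
    (hz : ∀ t ∈ Ioo a b, z t = (r t : ℂ) * Complex.exp ((θ t : ℂ) * Complex.I))
    (hr : ∀ t ∈ Ioo a b, r t ∈ Ioo 0 r₀)
    (hθ : ∀ t ∈ Ioo a b, θ t ∈ Ioo 0 (4 * π / (4 - (d : ℝ))))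
    (hz' : ∀ t ∈ Ioo a b,
      HasDerivAt z (Complex.exp ((((d : ℝ) / 4 * θ t : ℝ) : ℂ) * Complex.I)) t)
    (hw : ∀ t ∈ Ioo a b,
      w t = ((r t ^ ((4 - (d : ℝ)) / 8) : ℝ) : ℂ)
        * Complex.exp ((((4 - (d : ℝ)) / 8 * θ t : ℝ) : ℂ) * Complex.I))
    (t : ℝ) (ht : t ∈ Ioo a b) (w' : ℂ) (hw' : HasDerivAt w w' t) (hne : w' ≠ 0) :
    ∃ m : ℤ, Complex.arg w' = -((4 - (d : ℝ)) / 8 * θ t) + 2 * π * m := by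
  set β : ℝ := (4 - (d : ℝ)) / 8 with hβ
  set n : ℕ := (4 - d).toNat with hndef
  have hn : (n : ℝ) = 4 - (d : ℝ) := by
    have h0 : (0:ℤ) ≤ 4 - d := by omega
    have h1 : ((4 - d).toNat : ℤ) = 4 - d := Int.toNat_of_nonneg h0
    rw [hndef]
    rw [show (((4 - d).toNat : ℕ) : ℝ) = (((4 - d).toNat : ℤ) : ℝ) by push_cast; ring, h1]
    push_cast; ring
  have hn3 : 3 ≤ n := by
    rw [hndef]; omega
  have hrpos : 0 < r t := (hr t ht).1
  -- `w^8 = z^n` on the interval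
  have key : ∀ s ∈ Ioo a b, w s ^ 8 = z s ^ n := by
    intro s hs
    have hrs : 0 < r s := (hr s hs).1
    rw [hw s hs, hz s hs, mul_pow, mul_pow, ← Complex.exp_nat_mul, ← Complex.exp_nat_mul,
      ← Complex.ofReal_pow, ← Complex.ofReal_pow]
    have h1 : (r s ^ β) ^ (8:ℕ) = r s ^ (n:ℕ) := by
      rw [← Real.rpow_natCast (r s ^ β) 8, ← Real.rpow_mul hrs.le,
        ← Real.rpow_natCast (r s) n]
      congr 1
      rw [hn, hβ]; push_cast; ring
    have h2 : ((8:ℕ):ℂ) * (((β * θ s : ℝ):ℂ) * Complex.I)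
        = ((n:ℕ):ℂ) * (((θ s : ℝ):ℂ) * Complex.I) := by
      have hr' : (8:ℝ) * (β * θ s) = (n:ℝ) * θ s := by rw [hn, hβ]; ring
      have : ((8:ℝ) * (β * θ s) : ℂ) = ((n:ℝ) * θ s : ℂ) := by exact_mod_cast hr'
      push_cast at this ⊢
      linear_combination Complex.I * this
    rw [h1, h2]
  -- derivative identity via uniqueness
  have heqn : (fun s => z s ^ n) =ᶠ[nhds t] (fun s => w s ^ 8) := by
    filter_upwards [Ioo_mem_nhds ht.1 ht.2] with s hs using (key s hs).symm
  have hD1 : HasDerivAt (fun s => z s ^ n) ((8:ℂ) * w t ^ 7 * w') t := by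
    have h := (hasDerivAt_pow 8 (w t)).comp t hw'
    norm_num [Function.comp, mul_assoc] at h ⊢
    exact h.congr_of_eventuallyEq heqn
  have hD2 : HasDerivAt (fun s => z s ^ n)
      ((n:ℂ) * z t ^ (n - 1) * Complex.exp ((((d : ℝ) / 4 * θ t : ℝ) : ℂ) * Complex.I)) t := by
    have h := (hasDerivAt_pow n (z t)).comp t (hz' t ht)
    simpa [Function.comp_def] using h
  have heq8 : (8:ℂ) * w t ^ 7 * w'
      = (n:ℂ) * z t ^ (n - 1) * Complex.exp ((((d : ℝ) / 4 * θ t : ℝ) : ℂ) * Complex.I) :=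
    hD1.unique hD2
  -- the positive coefficient
  set c : ℝ := (n:ℝ) / 8 * r t ^ ((n:ℝ) - 1 - 7 * β) with hc
  have hcpos : 0 < c := by
    apply mul_pos
    · positivity
    · exact Real.rpow_pos_of_pos hrpos _
  have hwne : (8:ℂ) * w t ^ 7 ≠ 0 := by
    rw [hw t ht]
    apply mul_ne_zero (by norm_num)
    apply pow_ne_zero
    apply mul_ne_zero
    · exact_mod_cast (Real.rpow_pos_of_pos hrpos β).ne'
    · exact Complex.exp_ne_zero _
  have hfinal : w' = (c:ℂ) * Complex.exp (((-(β * θ t) : ℝ):ℂ) * Complex.I) := by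
    have hco : ((n:ℝ) * r t ^ (n-1 : ℕ) : ℝ) = 8 * (r t ^ β) ^ (7:ℕ) * c := by
      have hcast : ((n - 1 : ℕ) : ℝ) = (n:ℝ) - 1 := by
        have h1 : 1 ≤ n := by omega
        push_cast [Nat.cast_sub h1]; ring
      have e : r t ^ (β * ((7:ℕ):ℝ)) * r t ^ ((n:ℝ) - 1 - 7 * β)
          = r t ^ (((n - 1 : ℕ) : ℕ) : ℝ) := by
        rw [← Real.rpow_add hrpos]
        congr 1
        push_cast [hcast]
        ring
      rw [hc, ← Real.rpow_natCast (r t ^ β) 7, ← Real.rpow_mul hrpos.le,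
        ← Real.rpow_natCast (r t) (n-1), ← e]
      ring
    have hcoC : ((n:ℕ):ℂ) * ((r t ^ (n-1 : ℕ) : ℝ):ℂ)
        = 8 * ((r t ^ β : ℝ):ℂ) ^ (7:ℕ) * (c:ℂ) := by
      exact_mod_cast hco
    have hexp : Complex.exp (((n - 1 : ℕ):ℂ) * (((θ t : ℝ):ℂ) * Complex.I))
          * Complex.exp ((((d : ℝ) / 4 * θ t : ℝ) : ℂ) * Complex.I)
        = Complex.exp (((7:ℕ):ℂ) * (((β * θ t : ℝ):ℂ) * Complex.I))
          * Complex.exp (((-(β * θ t) : ℝ):ℂ) * Complex.I) := by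
      rw [← Complex.exp_add, ← Complex.exp_add]
      congr 1
      have hre : ((n - 1 : ℕ):ℝ) * θ t + (d:ℝ) / 4 * θ t
          = (7:ℝ) * (β * θ t) + (-(β * θ t)) := by
        have h1 : ((n - 1 : ℕ) : ℝ) = (n:ℝ) - 1 := by
          have : 1 ≤ n := by omega
          push_cast [Nat.cast_sub this]; ring
        rw [h1, hn, hβ]; ring
      have hreC : (((n - 1 : ℕ):ℝ) * θ t + (d:ℝ) / 4 * θ t : ℂ)
          = ((7:ℝ) * (β * θ t) + (-(β * θ t)) : ℂ) := by exact_mod_cast hre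
      push_cast at hreC ⊢
      linear_combination Complex.I * hreC
    have h2 : (8:ℂ) * w t ^ 7 * ((c:ℂ) * Complex.exp (((-(β * θ t) : ℝ):ℂ) * Complex.I))
        = (n:ℂ) * z t ^ (n - 1)
          * Complex.exp ((((d : ℝ) / 4 * θ t : ℝ) : ℂ) * Complex.I) := by
      rw [hz t ht, hw t ht]
      rw [mul_pow (((r t ^ β : ℝ):ℂ)), mul_pow ((r t : ℝ):ℂ), ← Complex.exp_nat_mul,
        ← Complex.exp_nat_mul, ← Complex.ofReal_pow, ← Complex.ofReal_pow]
      calc (8:ℂ) * ((((r t ^ β)^(7:ℕ) :ℝ):ℂ)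
              * Complex.exp (((7:ℕ):ℂ) * (((β * θ t : ℝ):ℂ) * Complex.I)))
            * ((c:ℂ) * Complex.exp (((-(β * θ t) : ℝ):ℂ) * Complex.I))
          = ((8:ℂ) * ((r t ^ β : ℝ):ℂ) ^ (7:ℕ) * (c:ℂ))
            * (Complex.exp (((7:ℕ):ℂ) * (((β * θ t : ℝ):ℂ) * Complex.I))
              * Complex.exp (((-(β * θ t) : ℝ):ℂ) * Complex.I)) := by
            push_cast; ring
        _ = (((n:ℕ):ℂ) * ((r t ^ (n-1 : ℕ) : ℝ):ℂ))
            * (Complex.exp (((n - 1 : ℕ):ℂ) * (((θ t : ℝ):ℂ) * Complex.I))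
              * Complex.exp ((((d : ℝ) / 4 * θ t : ℝ) : ℂ) * Complex.I)) := by
            rw [← hcoC, hexp]
        _ = ((n:ℕ):ℂ) * (((r t ^ (n-1 : ℕ) : ℝ):ℂ)
              * Complex.exp (((n - 1 : ℕ):ℂ) * (((θ t : ℝ):ℂ) * Complex.I)))
            * Complex.exp ((((d : ℝ) / 4 * θ t : ℝ) : ℂ) * Complex.I) := by
            ring
    exact mul_left_cancel₀ hwne (by rw [heq8, ← h2])
  -- conclude on the argument
  rw [hfinal, Complex.arg_real_mul _ hcpos, Complex.arg_exp_mul_I]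
  set k : ℤ := toIocDiv (mul_pos two_pos Real.pi_pos) (-π) (-(β * θ t)) with hk
  refine ⟨-k, ?_⟩
  have := toIocMod_add_toIocDiv_zsmul (mul_pos two_pos Real.pi_pos) (-π) (-(β * θ t))
  rw [← hk] at this
  have hm : toIocMod (mul_pos two_pos Real.pi_pos) (-π) (-(β * θ t))
      = -(β * θ t) - k * (2 * π) := by
    have h2 := this
    push_cast [zsmul_eq_mul] at h2
    linarith
  rw [hm, hβ]
  push_cast
  ring
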